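/- Let G be a 2-edge-connected graph and let {v1, ..., vk} be the vertices of a cycle C_k in G forming a C_k cut, i.e., G \ {v1,...,vk} is disconnected, with partition (V1, V2) of the remaining vertices having no edges between V1 and V2. Let G_i = G[V_i ∪ {v1,...,vk}] and G'_i = G_i | {v1,...,vk} for i ∈ {1,2}. If H_1 and H_2 are 2-edge-connected spanning subgraphs of G'_1 and G'_2 respectively, then H_1 ∪ H_2 ∪ {v1v2, v2v3, ..., v_{k-1}v_k, v_k v1} is a 2-edge-connected spanning subgraph of G. -/

import Mathlib

variable {V : Type*}

/-- Reachability between vertices using only edges from the edge set `F`. -/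
def ReachE (F : Set (Sym2 V)) (a b : V) : Prop :=
  Relation.ReflTransGen (fun x y => s(x, y) ∈ F) a b

/-- Reachability after contracting the vertex set `W` to a single vertex: besides
traversing edges of `F`, one may freely move between any two vertices of `W`. -/
def QReach (W : Set V) (F : Set (Sym2 V)) (a b : V) : Prop :=
  Relation.ReflTransGen (fun x y => s(x, y) ∈ F ∨ (x ∈ W ∧ y ∈ W)) a b

/-- `H` is a 2-edge-connected spanning subgraph. -/
def TwoECSS (H : Set (Sym2 V)) : Prop :=
  (∀ a b : V, ReachE H a b) ∧ ∀ e ∈ H, ∀ a b : V, ReachE (H \ {e}) a b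

/-- `F` is a 2-edge-connected spanning subgraph of the graph `(G[U]) | W`, obtained
from the subgraph of `G` induced on `U` by contracting the vertex set `W ⊆ U` into a
single vertex. -/
def TwoECContr (G : SimpleGraph V) (U W : Set V) (F : Set (Sym2 V)) : Prop :=
  F ⊆ G.edgeSet ∧ (∀ e ∈ F, ∀ x ∈ e, x ∈ U) ∧
    (∀ a ∈ U, ∀ b ∈ U, QReach W F a b) ∧
    ∀ e ∈ F, ∀ a ∈ U, ∀ b ∈ U, QReach W (F \ {e}) a b

lemma reachE_mono {F F' : Set (Sym2 V)} (h : F ⊆ F') {a b : V} (hab : ReachE F a b) :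
    ReachE F' a b :=
  Relation.ReflTransGen.mono (fun _ _ hxy => h hxy) _ _ hab

lemma reachE_symm {F : Set (Sym2 V)} {a b : V} (hab : ReachE F a b) : ReachE F b a :=
  haveI : Std.Symm (fun x y : V => s(x, y) ∈ F) := ⟨fun _ _ hxy => by rwa [Sym2.eq_swap]⟩
  Relation.ReflTransGen.stdSymm.symm _ _ (hab : Relation.ReflTransGen (fun x y : V => s(x, y) ∈ F) a b)

lemma qreach_lift {W : Set V} {F E' S : Set (Sym2 V)} (hF : F ⊆ S) (hE' : E' ⊆ S)
    (hW : ∀ x ∈ W, ∀ y ∈ W, ReachE E' x y) {a b : V} (h : QReach W F a b) :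
    ReachE S a b := by
  induction h with
  | refl => exact Relation.ReflTransGen.refl
  | tail _ hstep ih =>
      rcases hstep with hmem | ⟨hx, hy⟩
      · exact ih.tail (hF hmem)
      · exact ih.trans (reachE_mono hE' (hW _ hx _ hy))

lemma edge_inj {k : ℕ} (hk : 3 ≤ k) {v : ZMod k → V} (hvinj : Function.Injective v)
    {a b : ZMod k} (h : s(v a, v (a + 1)) = s(v b, v (b + 1))) : a = b := by
  haveI : NeZero k := ⟨by omega⟩
  rw [Sym2.eq_iff] at h
  rcases h with ⟨h1, _⟩ | ⟨h1, h2⟩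
  · exact hvinj h1
  · exfalso
    have e1 : a = b + 1 := hvinj h1
    have e2 : a + 1 = b := hvinj h2
    have h3 : b + 2 = b + 0 := by
      rw [show b + 2 = (b + 1) + 1 by ring, ← e1, e2, add_zero]
    have h4 : (2 : ZMod k) = 0 := add_left_cancel h3
    have h5 : ((2 : ℕ) : ZMod k) = 0 := by exact_mod_cast h4
    have h6 : k ∣ 2 := (CharP.cast_eq_zero_iff (ZMod k) k 2).mp h5
    have := Nat.le_of_dvd (by norm_num) h6
    omega

lemma cycle_path {k : ℕ} (hk : 3 ≤ k) {v : ZMod k → V} (hvinj : Function.Injective v)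
    (i₀ : ZMod k) (n : ℕ) (hn : n < k) :
    ReachE ((Set.range fun i : ZMod k => s(v i, v (i + 1))) \ {s(v i₀, v (i₀ + 1))})
      (v (i₀ + 1)) (v (i₀ + 1 + (n : ZMod k))) := by
  haveI : NeZero k := ⟨by omega⟩
  induction n with
  | zero => simpa [ReachE] using Relation.ReflTransGen.refl
  | succ n ih =>
      have hn' : n < k := by omega
      have hc : ((n + 1 : ℕ) : ZMod k) = (n : ZMod k) + 1 := by push_cast; ring
      rw [hc, ← add_assoc]
      refine (ih hn').tail ⟨⟨i₀ + 1 + (n : ZMod k), rfl⟩, ?_⟩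
      simp only [Set.mem_singleton_iff]
      intro hEq
      have h0 : i₀ + 1 + (n : ZMod k) = i₀ := edge_inj hk hvinj hEq
      have h1 : ((n + 1 : ℕ) : ZMod k) = 0 := by
        rw [hc]
        have : 1 + (n : ZMod k) = 0 := by
          have := h0
          rw [add_assoc] at this
          exact add_left_cancel (this.trans (add_zero i₀).symm)
        linear_combination this
      have h2 : k ∣ n + 1 := (CharP.cast_eq_zero_iff (ZMod k) k (n + 1)).mp h1
      have := Nat.le_of_dvd (by omega) h2
      omega

lemma cycle_conn {k : ℕ} (hk : 3 ≤ k) {v : ZMod k → V} (hvinj : Function.Injective v)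
    (i₀ i j : ZMod k) :
    ReachE ((Set.range fun i : ZMod k => s(v i, v (i + 1))) \ {s(v i₀, v (i₀ + 1))})
      (v i) (v j) := by
  haveI : NeZero k := ⟨by omega⟩
  have key : ∀ m : ZMod k,
      ReachE ((Set.range fun i : ZMod k => s(v i, v (i + 1))) \ {s(v i₀, v (i₀ + 1))})
        (v (i₀ + 1)) (v m) := by
    intro m
    have h := cycle_path hk hvinj i₀ (m - (i₀ + 1)).val (ZMod.val_lt _)
    rwa [show i₀ + 1 + (((m - (i₀ + 1)).val : ℕ) : ZMod k) = m from by
      rw [ZMod.natCast_rightInverse (m - (i₀ + 1))]; ring] at h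
  exact (reachE_symm (key i)).trans (key j)

/-- Let `G` be a 2-edge-connected graph and `v 0, ..., v (k-1)` the vertices of a cycle
`C_k` in `G` forming a `C_k` cut: `G \ {v 0, ..., v (k-1)}` is disconnected, with a
partition `(V1, V2)` of the remaining vertices having no edges between `V1` and `V2`.
Let `G_i = G[V_i ∪ {v 0, ..., v (k-1)}]` and `G'_i = G_i | {v 0, ..., v (k-1)}`.
If `H1` and `H2` are 2-edge-connected spanning subgraphs of `G'_1` and `G'_2`
respectively, then `H1 ∪ H2 ∪ {v 0 v 1, v 1 v 2, ..., v (k-1) v 0}` is a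
2-edge-connected spanning subgraph of `G`. -/
theorem glue_at_cycle_cut (G : SimpleGraph V)
    (hG : TwoECSS (G.edgeSet : Set (Sym2 V)))
    (k : ℕ) (hk : 3 ≤ k)
    (v : ZMod k → V) (hvinj : Function.Injective v)
    (hcyc : ∀ i : ZMod k, G.Adj (v i) (v (i + 1)))
    (V1 V2 : Set V)
    (hpart : V1 ∪ V2 = (Set.range v)ᶜ) (hdisj : Disjoint V1 V2)
    (h1 : V1.Nonempty) (h2 : V2.Nonempty)
    (hsep : ∀ a ∈ V1, ∀ b ∈ V2, ¬ G.Adj a b)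
    (H1 H2 : Set (Sym2 V))
    (hH1 : TwoECContr G (V1 ∪ Set.range v) (Set.range v) H1)
    (hH2 : TwoECContr G (V2 ∪ Set.range v) (Set.range v) H2) :
    TwoECSS (H1 ∪ H2 ∪ Set.range fun i : ZMod k => s(v i, v (i + 1))) := by
  classical
  obtain ⟨-, -, hQ1, hQ1'⟩ := hH1
  obtain ⟨-, -, hQ2, hQ2'⟩ := hH2
  set C : Set V := Set.range v with hC
  set EC : Set (Sym2 V) := Set.range fun i : ZMod k => s(v i, v (i + 1)) with hEC
  have hcov : ∀ x : V, x ∈ V1 ∪ C ∨ x ∈ V2 ∪ C := by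
    intro x
    by_cases hx : x ∈ C
    · exact Or.inl (Or.inr hx)
    · have hx' : x ∈ V1 ∪ V2 := by rw [hpart]; exact hx
      rcases hx' with h | h
      · exact Or.inl (Or.inl h)
      · exact Or.inr (Or.inl h)
  have hc1 : v 0 ∈ V1 ∪ C := Or.inr ⟨0, rfl⟩
  have hc2 : v 0 ∈ V2 ∪ C := Or.inr ⟨0, rfl⟩
  have combine : ∀ (F1 F2 E' S : Set (Sym2 V)),
      (∀ a ∈ V1 ∪ C, ∀ b ∈ V1 ∪ C, QReach C F1 a b) →
      (∀ a ∈ V2 ∪ C, ∀ b ∈ V2 ∪ C, QReach C F2 a b) →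
      (∀ x ∈ C, ∀ y ∈ C, ReachE E' x y) →
      F1 ⊆ S → F2 ⊆ S → E' ⊆ S → ∀ a b : V, ReachE S a b := by
    intro F1 F2 E' S hq1 hq2 hE hF1 hF2 hE' a b
    have lift1 : ∀ a ∈ V1 ∪ C, ∀ b ∈ V1 ∪ C, ReachE S a b := fun a ha b hb =>
      qreach_lift hF1 hE' hE (hq1 a ha b hb)
    have lift2 : ∀ a ∈ V2 ∪ C, ∀ b ∈ V2 ∪ C, ReachE S a b := fun a ha b hb =>
      qreach_lift hF2 hE' hE (hq2 a ha b hb)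
    rcases hcov a with ha | ha <;> rcases hcov b with hb | hb
    · exact lift1 a ha b hb
    · exact (lift1 a ha _ hc1).trans (lift2 _ hc2 b hb)
    · exact (lift2 a ha _ hc2).trans (lift1 _ hc1 b hb)
    · exact lift2 a ha b hb
  have hEconn : ∀ e : Sym2 V, ∀ x ∈ C, ∀ y ∈ C, ReachE (EC \ {e}) x y := by
    intro e x hx y hy
    obtain ⟨i, rfl⟩ := hx
    obtain ⟨j, rfl⟩ := hy
    by_cases he : e ∈ EC
    · obtain ⟨i₀, rfl⟩ := he
      exact cycle_conn hk hvinj i₀ i j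
    · rw [Set.diff_singleton_eq_self he]
      exact reachE_mono Set.diff_subset (cycle_conn hk hvinj 0 i j)
  have sub1 : H1 ⊆ H1 ∪ H2 ∪ EC := fun _ h => Or.inl (Or.inl h)
  have sub2 : H2 ⊆ H1 ∪ H2 ∪ EC := fun _ h => Or.inl (Or.inr h)
  have sub3 : EC ⊆ H1 ∪ H2 ∪ EC := fun _ h => Or.inr h
  constructor
  · exact combine H1 H2 EC _ hQ1 hQ2
      (fun x hx y hy => reachE_mono Set.diff_subset (hEconn (s(v 0, v 1)) x hx y hy))
      sub1 sub2 sub3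
  · intro e he a b
    have hq1 : ∀ a ∈ V1 ∪ C, ∀ b ∈ V1 ∪ C, QReach C (H1 \ {e}) a b := by
      by_cases h : e ∈ H1
      · exact hQ1' e h
      · rw [Set.diff_singleton_eq_self h]; exact hQ1
    have hq2 : ∀ a ∈ V2 ∪ C, ∀ b ∈ V2 ∪ C, QReach C (H2 \ {e}) a b := by
      by_cases h : e ∈ H2
      · exact hQ2' e h
      · rw [Set.diff_singleton_eq_self h]; exact hQ2
    exact combine (H1 \ {e}) (H2 \ {e}) (EC \ {e}) _ hq1 hq2 (hEconn e)
      (Set.diff_subset_diff_left sub1) (Set.diff_subset_diff_left sub2)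
      (Set.diff_subset_diff_left sub3) a b
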